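/- Let p be a prime and a ≥ b ≥ 1 integers. If the pair (a,b) is James, then the comparability graph on X(a,b) is connected. -/

import Mathlib

open Nat

private lemma digits_zero_iff_pow_dvd (p : ℕ) (hp : 2 ≤ p) (n : ℕ) :
    ∀ L, (∀ m < L, n / p ^ m % p = 0) ↔ p ^ L ∣ n := by
  intro L
  induction L with
  | zero => simp
  | succ L ih =>
    constructor
    · intro h
      have hL : p ^ L ∣ n := ih.mp (fun m hm => h m (hm.trans (Nat.lt_succ_self L)))
      have h2 : p ∣ n / p ^ L := Nat.dvd_of_mod_eq_zero (h L (Nat.lt_succ_self L))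
      rw [pow_succ]
      exact (Nat.dvd_div_iff_mul_dvd hL).mp h2
    · intro h m hm
      obtain ⟨c, hc⟩ := h
      have hmL : m + 1 ≤ L + 1 := hm
      have : n / p ^ m = p * (p ^ (L - m) * c) := by
        subst hc
        rw [show p ^ (L + 1) = p ^ m * (p * p ^ (L - m)) by
          rw [← _root_.pow_succ', ← pow_add]; congr 1; omega]
        rw [mul_assoc, Nat.mul_div_cancel_left _ (Nat.pow_pos (n := m) (by omega))]
        ring
      rw [this, Nat.mul_mod_right]

private lemma not_dvd_choose_mul_pow (p : ℕ) (hp : p.Prime) (k d : ℕ) (hk : k < p)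
    (hd : d ≤ k) : ∀ L, ¬ p ∣ Nat.choose (k * p ^ L) (d * p ^ L) := by
  haveI := Fact.mk hp
  intro L
  induction L with
  | zero =>
    simp only [pow_zero, mul_one]
    intro hdvd
    have h1 : Nat.choose k d ∣ k ! := by
      refine Dvd.intro_left (d ! * (k - d)!) ?_
      rw [← Nat.choose_mul_factorial_mul_factorial hd]; ring
    have := hp.dvd_factorial.mp (hdvd.trans h1)
    omega
  | succ L ih =>
    intro hdvd
    apply ih
    have hmod1 : k * p ^ (L + 1) % p = 0 := by
      rw [pow_succ, ← mul_assoc, Nat.mul_mod_left]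
    have hmod2 : d * p ^ (L + 1) % p = 0 := by
      rw [pow_succ, ← mul_assoc, Nat.mul_mod_left]
    have hdiv1 : k * p ^ (L + 1) / p = k * p ^ L := by
      rw [pow_succ, ← mul_assoc, Nat.mul_div_cancel _ hp.pos]
    have hdiv2 : d * p ^ (L + 1) / p = d * p ^ L := by
      rw [pow_succ, ← mul_assoc, Nat.mul_div_cancel _ hp.pos]
    have h := Choose.choose_modEq_choose_mod_mul_choose_div_nat
      (p := p) (n := k * p ^ (L + 1)) (k := d * p ^ (L + 1))
    rw [hmod1, hmod2, hdiv1, hdiv2, Nat.choose_self, one_mul] at h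
    have h0 : Nat.choose (k * p ^ (L + 1)) (d * p ^ (L + 1)) ≡ 0 [MOD p] :=
      (Nat.modEq_zero_iff_dvd).mpr hdvd
    exact (Nat.modEq_zero_iff_dvd).mp (h.symm.trans h0)

/-- Let `p` be a prime and `a ≥ b ≥ 1` with `(a,b)` James (i.e.
`p^{l_p(b)} ∣ a + 1`).  Let `X(a,b) = { j | j < b ∧ ∀ m < l_p(b), (b−j)_m + a_m < p }`
(where `n_m` is the `m`-th base-`p` digit).  The comparability graph on `X(a,b)`,
joining `i > j` iff `C(b − j, i − j) ≢ 0 (mod p)`, is connected. -/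
theorem james_comparability_graph_connected (p : ℕ) (hp : p.Prime)
    (a b : ℕ) (hb : 1 ≤ b) (hab : b ≤ a)
    (hJames : p ^ Nat.log p b ∣ a + 1) :
    ((SimpleGraph.fromRel
        (fun i j : ℕ => j < i ∧ ¬ p ∣ Nat.choose (b - j) (i - j))).induce
      {j : ℕ | j < b ∧ ∀ m < Nat.log p b, (b - j) / p ^ m % p + a / p ^ m % p < p}).Connected := by
  set L := Nat.log p b with hL
  set q := p ^ L with hq
  have hp2 : 2 ≤ p := hp.two_le
  have hqpos : 0 < q := Nat.pow_pos (n := L) (by omega)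
  have hqb : q ≤ b := Nat.pow_log_le_self p (by omega)
  have hbq : b < q * p := by
    have := Nat.lt_pow_succ_log_self hp.one_lt b
    rwa [pow_succ] at this
  -- digits of a below L are p - 1
  have ha : ∀ m < L, a / p ^ m % p = p - 1 := by
    intro m hm
    obtain ⟨c, hc⟩ := hJames
    have hc1 : 1 ≤ c := Nat.pos_of_ne_zero (fun h => by simp [h] at hc)
    have hsplit : (p : ℕ) ^ L = p ^ m * p ^ (L - m) := by rw [← pow_add]; congr 1; omega
    have hpx : p ∣ p ^ (L - m) * c := Dvd.dvd.mul_right (dvd_pow_self p (by omega)) c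
    obtain ⟨y, hy⟩ := hpx
    have hy1 : 1 ≤ y := by
      rcases Nat.eq_zero_or_pos y with h | h
      · rw [h, mul_zero] at hy
        have := Nat.one_le_pow (L - m) p (by omega)
        nlinarith
      · exact h
    have hax : a + 1 = p ^ m * (p * y) := by rw [hc, hq, hsplit, mul_assoc, hy]
    obtain ⟨y', rfl⟩ : ∃ y', y = y' + 1 := ⟨y - 1, by omega⟩
    rw [Nat.mul_succ, Nat.mul_add] at hax
    have hPm : 1 ≤ p ^ m := Nat.one_le_pow _ _ (by omega)
    have key : a = p ^ m * (p * y' + (p - 1)) + (p ^ m - 1) := by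
      have hB : p ^ m * (p - 1) = p ^ m * p - p ^ m := by
        rw [← Nat.pred_eq_sub_one, Nat.mul_pred]
      have hBC : p ^ m ≤ p ^ m * p := Nat.le_mul_of_pos_right _ (by omega)
      rw [Nat.mul_add, hB]
      omega
    have hadiv : a / p ^ m = p * y' + (p - 1) := by
      rw [key, Nat.mul_add_div (by omega), Nat.div_eq_of_lt (by omega)]
      omega
    rw [hadiv, Nat.mul_add_mod, Nat.mod_eq_of_lt (by omega)]
  -- membership characterization
  have hX : ∀ j : ℕ, (j ∈ {j : ℕ | j < b ∧ ∀ m < L, (b - j) / p ^ m % p + a / p ^ m % p < p})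
      ↔ (j < b ∧ q ∣ (b - j)) := by
    intro j
    simp only [Set.mem_setOf_eq]
    constructor
    · rintro ⟨hjb, hdig⟩
      refine ⟨hjb, (digits_zero_iff_pow_dvd p hp2 (b - j) L).mp ?_⟩
      intro m hm
      have := hdig m hm
      rw [ha m hm] at this
      omega
    · rintro ⟨hjb, hdvd⟩
      refine ⟨hjb, ?_⟩
      intro m hm
      have h0 := (digits_zero_iff_pow_dvd p hp2 (b - j) L).mpr hdvd m hm
      rw [h0, ha m hm]
      omega
  -- key edge lemma
  have hedge : ∀ i j : ℕ, j < b → i < b → q ∣ (b - j) → q ∣ (b - i) → j < i →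
      ¬ p ∣ Nat.choose (b - j) (i - j) := by
    intro i j hjb hib hdj hdi hji
    have hij : i - j = (b - j) - (b - i) := by omega
    have hdd : q ∣ (b - j) - (b - i) := Nat.dvd_sub hdj hdi
    obtain ⟨k, hk⟩ := hdj
    obtain ⟨d, hd⟩ := hdd
    have hk_lt : k < p := by
      by_contra h
      push_neg at h
      have : q * p ≤ q * k := Nat.mul_le_mul_left q h
      omega
    have hd_le : d ≤ k := by
      by_contra h
      push_neg at h
      have : q * k < q * d := (Nat.mul_lt_mul_left hqpos).mpr h
      omega
    rw [hij, hd, hk, mul_comm q k, mul_comm q d]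
    exact not_dvd_choose_mul_pow p hp k d hk_lt hd_le L
  -- nonempty
  have hmem0 : (b - q) ∈ {j : ℕ | j < b ∧ ∀ m < L, (b - j) / p ^ m % p + a / p ^ m % p < p} := by
    rw [hX]
    constructor
    · omega
    · rw [Nat.sub_sub_self hqb]
  rw [SimpleGraph.connected_iff]
  constructor
  · intro u v
    rcases u with ⟨i, hi⟩
    rcases v with ⟨j, hj⟩
    rcases eq_or_ne i j with h | h
    · subst h
      rfl
    · apply SimpleGraph.Adj.reachable
      simp only [SimpleGraph.comap_adj, Function.Embedding.coe_subtype,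
        SimpleGraph.fromRel_adj]
      have hi' := (hX i).mp hi
      have hj' := (hX j).mp hj
      refine ⟨h, ?_⟩
      rcases Nat.lt_or_ge j i with hlt | hge
      · exact Or.inl ⟨hlt, hedge i j hj'.1 hi'.1 hj'.2 hi'.2 hlt⟩
      · have hlt : i < j := by omega
        exact Or.inr ⟨hlt, hedge j i hi'.1 hj'.1 hi'.2 hj'.2 hlt⟩
  · exact ⟨⟨b - q, hmem0⟩⟩
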